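/- arXiv:2104.14537 — 2 statements merged into one kernel-verified Lean document; each statement's English description precedes it below -/
import Mathlib

section
/- Let x, y, z ∈ ℝ^n have nonzero variance, and let ρ denote the sample Pearson correlation. If ρ(x, y) = cos α and ρ(y, z) = cos β with α, β ∈ [0, π], then cos(α + β) ≤ ρ(x, z) ≤ cos(α − β). -/
noncomputable def mean {n : ℕ} (x : Fin n → ℝ) : ℝ := (∑ i, x i) / n

noncomputable def std {n : ℕ} (x : Fin n → ℝ) : ℝ :=
  Real.sqrt ((∑ i, (x i - mean x) ^ 2) / n)

noncomputable def pearson {n : ℕ} (x y : Fin n → ℝ) : ℝ :=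
  ((∑ i, (x i - mean x) * (y i - mean y)) / n) / (std x * std y)

lemma std_sq_pos_sum {n : ℕ} (x : Fin n → ℝ) (hx : 0 < std x) :
    0 < (∑ i, (x i - mean x) ^ 2) / n ∧
      std x ^ 2 = (∑ i, (x i - mean x) ^ 2) / n := by
  have h1 : 0 ≤ (∑ i, (x i - mean x) ^ 2) / n := by
    apply div_nonneg
    · exact Finset.sum_nonneg fun i _ => sq_nonneg _
    · positivity
  have h2 : std x ^ 2 = (∑ i, (x i - mean x) ^ 2) / n := Real.sq_sqrt h1
  refine ⟨?_, h2⟩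
  rcases h1.lt_or_eq with h | h
  · exact h
  · exfalso; rw [std, ← h, Real.sqrt_zero] at hx; exact lt_irrefl 0 hx

lemma norm_sum {n : ℕ} (x : Fin n → ℝ) (hx : 0 < std x) :
    ∑ i, ((x i - mean x) / (std x * Real.sqrt n)) ^ 2 = 1 := by
  obtain ⟨hpos, hsq⟩ := std_sq_pos_sum x hx
  have hn : (0 : ℝ) < n := by
    rcases Nat.eq_zero_or_pos n with h | h
    · exfalso; subst h; norm_num at hpos
    · exact_mod_cast h
  have hS : 0 < ∑ i, (x i - mean x) ^ 2 := by
    have := mul_pos hpos hn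
    rwa [div_mul_cancel₀] at this
    exact ne_of_gt hn
  have hsn : Real.sqrt n ^ 2 = n := Real.sq_sqrt hn.le
  have : ∑ i, ((x i - mean x) / (std x * Real.sqrt n)) ^ 2
      = (∑ i, (x i - mean x) ^ 2) / (std x ^ 2 * n) := by
    rw [Finset.sum_div]
    apply Finset.sum_congr rfl
    intro i _
    rw [div_pow, mul_pow, hsn]
  rw [this, hsq]
  field_simp

lemma pearson_inner {n : ℕ} (x y : Fin n → ℝ) (hx : 0 < std x) (hy : 0 < std y) :
    ∑ i, ((x i - mean x) / (std x * Real.sqrt n)) * ((y i - mean y) / (std y * Real.sqrt n))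
      = pearson x y := by
  obtain ⟨hpos, _⟩ := std_sq_pos_sum x hx
  have hn : (0 : ℝ) < n := by
    rcases Nat.eq_zero_or_pos n with h | h
    · exfalso; subst h; norm_num at hpos
    · exact_mod_cast h
  have hsn : Real.sqrt n * Real.sqrt n = n := Real.mul_self_sqrt hn.le
  have : ∑ i, ((x i - mean x) / (std x * Real.sqrt n)) * ((y i - mean y) / (std y * Real.sqrt n))
      = (∑ i, (x i - mean x) * (y i - mean y)) / (std x * std y * n) := by
    rw [Finset.sum_div]
    apply Finset.sum_congr rfl
    intro i _
    have hd : std x * Real.sqrt n * (std y * Real.sqrt n) = std x * std y * n := by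
      rw [mul_mul_mul_comm, hsn]
    rw [div_mul_div_comm, hd]
  rw [this, pearson, div_div]
  ring

theorem stmt_4 {n : ℕ} (x y z : Fin n → ℝ)
    (hx : 0 < std x) (hy : 0 < std y) (hz : 0 < std z)
    (α β : ℝ) (hα : α ∈ Set.Icc 0 Real.pi) (hβ : β ∈ Set.Icc 0 Real.pi)
    (hxy : pearson x y = Real.cos α) (hyz : pearson y z = Real.cos β) :
    Real.cos (α + β) ≤ pearson x z ∧ pearson x z ≤ Real.cos (α - β) := by
  obtain ⟨hα0, hαπ⟩ := hα
  obtain ⟨hβ0, hβπ⟩ := hβ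
  set f : Fin n → ℝ := fun i => (x i - mean x) / (std x * Real.sqrt n) with hf
  set g : Fin n → ℝ := fun i => (y i - mean y) / (std y * Real.sqrt n) with hg
  set h : Fin n → ℝ := fun i => (z i - mean z) / (std z * Real.sqrt n) with hh
  have hff : ∑ i, f i ^ 2 = 1 := norm_sum x hx
  have hgg : ∑ i, g i ^ 2 = 1 := norm_sum y hy
  have hhh : ∑ i, h i ^ 2 = 1 := norm_sum z hz
  have hfg : ∑ i, f i * g i = pearson x y := pearson_inner x y hx hy
  have hgh : ∑ i, g i * h i = pearson y z := pearson_inner y z hy hz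
  have hfh : ∑ i, f i * h i = pearson x z := pearson_inner x z hx hz
  set a := Real.cos α
  set b := Real.cos β
  set c := pearson x z
  have key : (c - a * b) ^ 2 ≤ (1 - a ^ 2) * (1 - b ^ 2) := by
    have CS := Finset.sum_mul_sq_le_sq_mul_sq Finset.univ
      (fun i => f i - a * g i) (fun i => h i - b * g i)
    have e1 : ∑ i, (f i - a * g i) * (h i - b * g i) = c - a * b := by
      have : ∀ i, (f i - a * g i) * (h i - b * g i)
          = f i * h i - b * (f i * g i) - a * (g i * h i) + a * b * g i ^ 2 := by
        intro i; ring
      simp_rw [this, Finset.sum_add_distrib, Finset.sum_sub_distrib,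
        ← Finset.mul_sum, hfg, hgh, hfh, hgg, hxy, hyz]
      ring
    have e2 : ∑ i, (f i - a * g i) ^ 2 = 1 - a ^ 2 := by
      have : ∀ i, (f i - a * g i) ^ 2
          = f i ^ 2 - 2 * a * (f i * g i) + a ^ 2 * g i ^ 2 := by intro i; ring
      simp_rw [this, Finset.sum_add_distrib, Finset.sum_sub_distrib,
        ← Finset.mul_sum, hff, hgg, hfg, hxy]
      ring
    have e3 : ∑ i, (h i - b * g i) ^ 2 = 1 - b ^ 2 := by
      have : ∀ i, (h i - b * g i) ^ 2
          = h i ^ 2 - 2 * b * (g i * h i) + b ^ 2 * g i ^ 2 := by intro i; ring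
      simp_rw [this, Finset.sum_add_distrib, Finset.sum_sub_distrib,
        ← Finset.mul_sum, hhh, hgg, hgh, hyz]
      ring
    rw [e1, e2, e3] at CS
    exact CS
  have hsa : Real.sin α ≥ 0 := Real.sin_nonneg_of_nonneg_of_le_pi hα0 hαπ
  have hsb : Real.sin β ≥ 0 := Real.sin_nonneg_of_nonneg_of_le_pi hβ0 hβπ
  have hsa2 : 1 - a ^ 2 = Real.sin α ^ 2 := by
    have := Real.sin_sq_add_cos_sq α; simp only [a]; linarith
  have hsb2 : 1 - b ^ 2 = Real.sin β ^ 2 := by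
    have := Real.sin_sq_add_cos_sq β; simp only [b]; linarith
  rw [hsa2, hsb2] at key
  have hs : 0 ≤ Real.sin α * Real.sin β := mul_nonneg hsa hsb
  have habs : (c - a * b) ^ 2 ≤ (Real.sin α * Real.sin β) ^ 2 := by
    calc (c - a * b) ^ 2 ≤ Real.sin α ^ 2 * Real.sin β ^ 2 := key
      _ = (Real.sin α * Real.sin β) ^ 2 := by ring
  constructor
  · rw [Real.cos_add]
    nlinarith [habs, hs]
  · rw [Real.cos_sub]
    nlinarith [habs, hs]
end

section
/- Let f, s, ŷ ∈ ℝ^n have positive sample standard deviations. Suppose ρ(f, s) ≥ cos α for some α ∈ [0, π/2), and |ρ(f, ŷ)| ≤ sin δ for some δ ∈ [0, π/2) (i.e., the angle between standardized f and ŷ lies in [π/2 − δ, π/2 + δ]). Then |ρ(s, ŷ)| ≤ sin(δ + α), provided δ + α ≤ π/2. -/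
lemma std_sq {n : ℕ} (x : Fin n → ℝ) :
    std x ^ 2 = (∑ i, (x i - mean x) ^ 2) / n := by
  rw [std, Real.sq_sqrt]
  positivity

lemma sum_norm_sq {n : ℕ} (hn : (0:ℝ) < n) (x : Fin n → ℝ) (hx : 0 < std x) :
    ∑ i, ((x i - mean x) / (std x * Real.sqrt n)) ^ 2 = 1 := by
  have h2 : std x ^ 2 ≠ 0 := by positivity
  have hsq : (std x * Real.sqrt n) ^ 2 = std x ^ 2 * n := by
    rw [mul_pow, Real.sq_sqrt hn.le]
  simp_rw [div_pow, ← Finset.sum_div, hsq]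
  rw [std_sq] at h2 ⊢
  have hQ : (∑ i, (x i - mean x) ^ 2) ≠ 0 := by
    intro h; rw [h] at h2; simp at h2
  field_simp

lemma sum_norm_mul {n : ℕ} (hn : (0:ℝ) < n) (x y : Fin n → ℝ) :
    ∑ i, ((x i - mean x) / (std x * Real.sqrt n)) * ((y i - mean y) / (std y * Real.sqrt n))
      = pearson x y := by
  simp_rw [div_mul_div_comm, ← Finset.sum_div, pearson]
  rw [div_div]
  congr 1
  have h : Real.sqrt n * Real.sqrt n = n := Real.mul_self_sqrt hn.le
  calc std x * Real.sqrt ↑n * (std y * Real.sqrt ↑n)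
      = (Real.sqrt n * Real.sqrt n) * (std x * std y) := by ring
    _ = ↑n * (std x * std y) := by rw [h]

set_option maxHeartbeats 1000000 in
theorem stmt_5 {n : ℕ} (f s yhat : Fin n → ℝ)
    (hf : 0 < std f) (hs : 0 < std s) (hy : 0 < std yhat)
    (α δ : ℝ) (hα : α ∈ Set.Ico 0 (Real.pi / 2)) (hδ : δ ∈ Set.Ico 0 (Real.pi / 2))
    (h1 : Real.cos α ≤ pearson f s)
    (h2 : |pearson f yhat| ≤ Real.sin δ)
    (hsum : δ + α ≤ Real.pi / 2) :
    |pearson s yhat| ≤ Real.sin (δ + α) := by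
  have hn : (0:ℝ) < n := by
    rcases Nat.eq_zero_or_pos n with h | h
    · subst h; simp [std, mean] at hf
    · exact_mod_cast h
  set u : Fin n → ℝ := fun i => (f i - mean f) / (std f * Real.sqrt n) with hu
  set v : Fin n → ℝ := fun i => (s i - mean s) / (std s * Real.sqrt n) with hv
  set w : Fin n → ℝ := fun i => (yhat i - mean yhat) / (std yhat * Real.sqrt n) with hw
  have huu : ∑ i, u i ^ 2 = 1 := sum_norm_sq hn f hf
  have hvv : ∑ i, v i ^ 2 = 1 := sum_norm_sq hn s hs
  have hww : ∑ i, w i ^ 2 = 1 := sum_norm_sq hn yhat hy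
  set a := pearson f s with ha
  set b := pearson f yhat with hb
  set c := pearson s yhat with hc
  have huv : ∑ i, u i * v i = a := sum_norm_mul hn f s
  have huw : ∑ i, u i * w i = b := sum_norm_mul hn f yhat
  have hvw : ∑ i, v i * w i = c := sum_norm_mul hn s yhat
  have ha2 : a ^ 2 ≤ 1 := by
    have := Finset.sum_mul_sq_le_sq_mul_sq Finset.univ u v
    rwa [huv, huu, hvv, one_mul] at this
  have hb2 : b ^ 2 ≤ 1 := by
    have := Finset.sum_mul_sq_le_sq_mul_sq Finset.univ u w
    rwa [huw, huu, hww, one_mul] at this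
  have hgram : (c - a * b) ^ 2 ≤ (1 - a ^ 2) * (1 - b ^ 2) := by
    have key := Finset.sum_mul_sq_le_sq_mul_sq Finset.univ
      (fun i => v i - a * u i) (fun i => w i - b * u i)
    have e1 : ∑ i, (v i - a * u i) * (w i - b * u i) = c - a * b := by
      have h : ∀ i, (v i - a * u i) * (w i - b * u i)
          = v i * w i - b * (u i * v i) - a * (u i * w i) + a * b * (u i ^ 2) := by
        intro i; ring
      simp_rw [h, Finset.sum_add_distrib, Finset.sum_sub_distrib, ← Finset.mul_sum,
        huu, huv, huw, hvw]
      ring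
    have e2 : ∑ i, (v i - a * u i) ^ 2 = 1 - a ^ 2 := by
      have h : ∀ i, (v i - a * u i) ^ 2
          = v i ^ 2 - 2 * a * (u i * v i) + a ^ 2 * (u i ^ 2) := by
        intro i; ring
      simp_rw [h, Finset.sum_add_distrib, Finset.sum_sub_distrib, ← Finset.mul_sum,
        huu, huv, hvv]
      ring
    have e3 : ∑ i, (w i - b * u i) ^ 2 = 1 - b ^ 2 := by
      have h : ∀ i, (w i - b * u i) ^ 2
          = w i ^ 2 - 2 * b * (u i * w i) + b ^ 2 * (u i ^ 2) := by
        intro i; ring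
      simp_rw [h, Finset.sum_add_distrib, Finset.sum_sub_distrib, ← Finset.mul_sum,
        huu, huw, hww]
      ring
    rwa [e1, e2, e3] at key
  obtain ⟨hα0, hα2⟩ := hα
  obtain ⟨hδ0, hδ2⟩ := hδ
  have hpi := Real.pi_pos
  have hcosα : (0:ℝ) < Real.cos α := Real.cos_pos_of_mem_Ioo ⟨by linarith, hα2⟩
  have hapos : 0 < a := lt_of_lt_of_le hcosα h1
  have h1a2 : (0:ℝ) ≤ 1 - a ^ 2 := by nlinarith
  have h1b2 : (0:ℝ) ≤ 1 - b ^ 2 := by nlinarith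
  have hb1 : |b| ≤ 1 := by
    have h := sq_abs b
    nlinarith [abs_nonneg b]
  set α' := Real.arcsin (Real.sqrt (1 - a ^ 2)) with hα'
  set δ' := Real.arcsin |b| with hδ'
  have hs1a : Real.sqrt (1 - a ^ 2) ≤ 1 := by
    exact Real.sqrt_le_one.2 (by nlinarith)
  have hsinα' : Real.sin α' = Real.sqrt (1 - a ^ 2) :=
    Real.sin_arcsin (by linarith [Real.sqrt_nonneg (1 - a ^ 2)]) hs1a
  have hcosα' : Real.cos α' = a := by
    rw [hα', Real.cos_arcsin, Real.sq_sqrt h1a2,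
      show (1 - (1 - a ^ 2)) = a ^ 2 by ring, Real.sqrt_sq hapos.le]
  have hsinδ' : Real.sin δ' = |b| :=
    Real.sin_arcsin (by linarith [abs_nonneg b]) hb1
  have hcosδ' : Real.cos δ' = Real.sqrt (1 - b ^ 2) := by
    rw [hδ', Real.cos_arcsin, sq_abs]
  have hsinα_nonneg : 0 ≤ Real.sin α := Real.sin_nonneg_of_nonneg_of_le_pi hα0 (by linarith)
  have hα'le : α' ≤ α := by
    have hle : Real.sqrt (1 - a ^ 2) ≤ Real.sin α := by
      have h : 1 - a ^ 2 ≤ Real.sin α ^ 2 := by nlinarith [Real.sin_sq_add_cos_sq α]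
      calc Real.sqrt (1 - a ^ 2) ≤ Real.sqrt (Real.sin α ^ 2) := Real.sqrt_le_sqrt h
        _ = Real.sin α := Real.sqrt_sq hsinα_nonneg
    calc α' ≤ Real.arcsin (Real.sin α) := Real.monotone_arcsin hle
      _ = α := Real.arcsin_sin (by linarith) (by linarith)
  have hδ'le : δ' ≤ δ := by
    calc δ' ≤ Real.arcsin (Real.sin δ) := Real.monotone_arcsin h2
      _ = δ := Real.arcsin_sin (by linarith) (by linarith)
  have hα'0 : 0 ≤ α' := Real.arcsin_nonneg.2 (Real.sqrt_nonneg _)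
  have hδ'0 : 0 ≤ δ' := Real.arcsin_nonneg.2 (abs_nonneg _)
  have hcab : |c - a * b| ≤ Real.sqrt (1 - a ^ 2) * Real.sqrt (1 - b ^ 2) := by
    have h := Real.sqrt_le_sqrt hgram
    rwa [Real.sqrt_sq_eq_abs, Real.sqrt_mul h1a2] at h
  have hab : |a * b| = a * |b| := by
    rw [abs_mul, abs_of_pos hapos]
  have hmono : Real.sin (α' + δ') ≤ Real.sin (δ + α) := by
    apply Real.strictMonoOn_sin.monotoneOn
    · constructor <;> [linarith; linarith]
    · constructor <;> [linarith; linarith]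
    · linarith
  calc |c| = |(c - a * b) + a * b| := by ring_nf
    _ ≤ |c - a * b| + |a * b| := abs_add_le _ _
    _ ≤ Real.sqrt (1 - a ^ 2) * Real.sqrt (1 - b ^ 2) + a * |b| := by
        rw [hab]; exact add_le_add hcab le_rfl
    _ = Real.sin α' * Real.cos δ' + Real.cos α' * Real.sin δ' := by
        rw [hsinα', hcosδ', hcosα', hsinδ']
    _ = Real.sin (α' + δ') := (Real.sin_add α' δ').symm
    _ ≤ Real.sin (δ + α) := hmono
end
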